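/- arXiv:2009.00557 — 2 statements merged into one kernel-verified Lean document; each statement's English description precedes it below -/
import Mathlib

section
/- Let c : [−X_c, X_c] → ℝ be integrable with Fourier transform ĉ(κ) = ∫_{−X_c}^{X_c} e^{i2πκx} c(x) dx, and suppose c equals the sum of its Fourier series c(x) = (1/(2X_c)) ∑_{n∈ℤ} ĉ(κ_n) e^{−i2πκ_n x} with κ_n = n/(2X_c), with the series converging in L¹. Then for every real κ, ĉ(κ) = ∑_{n∈ℤ} ĉ(κ_n) · sinc(2π(κ_n − κ)X_c). -/
open Real MeasureTheory Filter Topology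

/-- sinc(t) = sin t / t, continuously extended by sinc 0 = 1. -/
noncomputable def sinc (t : ℝ) : ℝ := if t = 0 then 1 else Real.sin t / t

noncomputable def ftBounded (Xc : ℝ) (c : ℝ → ℝ) (κ : ℝ) : ℂ :=
  ∫ x in (-Xc)..Xc, Complex.exp (Complex.I * 2 * π * κ * x) * (c x : ℂ)

lemma sinc_neg (t : ℝ) : _root_.sinc (-t) = _root_.sinc t := by
  rcases eq_or_ne t 0 with h | h
  · simp [h]
  · simp [_root_.sinc, h, neg_ne_zero.mpr h, neg_div_neg_eq]

lemma integral_exp_sinc (a X : ℝ) :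
    ∫ x in (-X)..X, Complex.exp (Complex.I * a * x) = 2 * X * _root_.sinc (a * X) := by
  rcases eq_or_ne a 0 with h | h
  · simp [h, _root_.sinc, two_mul]
  · have hc : (Complex.I * (a:ℂ)) ≠ 0 := by simp [Complex.ext_iff, h]
    have := integral_exp_mul_complex (a := (-X:ℝ)) (b := X) hc
    simp only [mul_assoc] at this ⊢
    rw [this]
    rcases eq_or_ne X 0 with hX | hX
    · simp [hX]
    · have hs : _root_.sinc (a * X) = Real.sin (a*X) / (a*X) := by
        simp [_root_.sinc, mul_ne_zero h hX]
      rw [hs]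
      have h1 : Complex.I * ((a:ℂ) * (X:ℝ)) = ((a:ℂ) * X) * Complex.I := by ring
      have h2 : Complex.I * ((a:ℂ) * ((-X:ℝ):ℂ)) = -((a:ℂ) * X) * Complex.I := by
        push_cast; ring
      rw [h1, h2]
      have key : Complex.exp (((a:ℂ)*X) * Complex.I) - Complex.exp (-((a:ℂ)*X) * Complex.I)
          = 2 * Complex.I * Complex.sin ((a:ℂ)*X) := by
        rw [Complex.sin]; ring_nf
        rw [Complex.I_sq]; ring
      rw [key]
      have ha : (a:ℂ) ≠ 0 := by exact_mod_cast h
      have hXc : (X:ℂ) ≠ 0 := by exact_mod_cast hX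
      push_cast
      field_simp

theorem shannon_sampling (Xc : ℝ) (hXc : 0 < Xc) (c : ℝ → ℝ)
    (hInt : IntegrableOn c (Set.Icc (-Xc) Xc))
    (hL1 : Tendsto (fun N : ℕ =>
      ∫ x in (-Xc)..Xc, ‖(c x : ℂ) -
        (1 / (2 * Xc)) * ∑ n ∈ Finset.Icc (-(N : ℤ)) (N : ℤ),
          ftBounded Xc c ((n : ℝ) / (2 * Xc)) *
            Complex.exp (-Complex.I * 2 * π * ((n : ℝ) / (2 * Xc)) * x)‖)
      atTop (nhds 0)) :
    ∀ κ : ℝ, Tendsto (fun N : ℕ =>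
      ∑ n ∈ Finset.Icc (-(N : ℤ)) (N : ℤ),
        ftBounded Xc c ((n : ℝ) / (2 * Xc)) *
          (_root_.sinc (2 * π * ((n : ℝ) / (2 * Xc) - κ) * Xc) : ℂ))
      atTop (nhds (ftBounded Xc c κ)) := by
  intro κ
  have hle : (-Xc) ≤ Xc := by linarith
  set S : ℕ → ℝ → ℂ := fun N x =>
    (1 / (2 * Xc)) * ∑ n ∈ Finset.Icc (-(N : ℤ)) (N : ℤ),
      ftBounded Xc c ((n : ℝ) / (2 * Xc)) *
        Complex.exp (-Complex.I * 2 * π * ((n : ℝ) / (2 * Xc)) * x) with hS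
  -- Step A : partial sums as integrals
  have hA : ∀ N : ℕ,
      (∑ n ∈ Finset.Icc (-(N : ℤ)) (N : ℤ),
        ftBounded Xc c ((n : ℝ) / (2 * Xc)) *
          (_root_.sinc (2 * π * ((n : ℝ) / (2 * Xc) - κ) * Xc) : ℂ))
      = ∫ x in (-Xc)..Xc, Complex.exp (Complex.I * 2 * π * κ * x) * S N x := by
    intro N
    have hterm : ∀ n : ℤ, ∀ x : ℝ,
        Complex.exp (Complex.I * 2 * π * κ * x) *
          Complex.exp (-Complex.I * 2 * π * ((n : ℝ) / (2 * Xc)) * x)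
        = Complex.exp (Complex.I * ((2 * π * (κ - (n : ℝ) / (2 * Xc))) : ℝ) * x) := by
      intro n x
      rw [← Complex.exp_add]
      congr 1
      push_cast
      ring
    calc
      (∑ n ∈ Finset.Icc (-(N : ℤ)) (N : ℤ),
          ftBounded Xc c ((n : ℝ) / (2 * Xc)) *
            (_root_.sinc (2 * π * ((n : ℝ) / (2 * Xc) - κ) * Xc) : ℂ))
        = ∑ n ∈ Finset.Icc (-(N : ℤ)) (N : ℤ),
            (1 / (2 * Xc) : ℂ) * (ftBounded Xc c ((n : ℝ) / (2 * Xc)) *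
              ∫ x in (-Xc)..Xc,
                Complex.exp (Complex.I * ((2 * π * (κ - (n : ℝ) / (2 * Xc))) : ℝ) * x)) := by
          refine Finset.sum_congr rfl fun n _ => ?_
          rw [integral_exp_sinc]
          have : 2 * π * ((n : ℝ) / (2 * Xc) - κ) * Xc
              = -(2 * π * (κ - (n : ℝ) / (2 * Xc)) * Xc) := by ring
          rw [this, _root_.sinc_neg]
          have hXc' : (Xc : ℂ) ≠ 0 := by exact_mod_cast hXc.ne'
          push_cast
          field_simp
      _ = ∫ x in (-Xc)..Xc, Complex.exp (Complex.I * 2 * π * κ * x) * S N x := by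
          have hfun : ∀ x : ℝ, Complex.exp (Complex.I * 2 * π * κ * x) * S N x
              = ∑ n ∈ Finset.Icc (-(N : ℤ)) (N : ℤ),
                (1 / (2 * Xc) : ℂ) * (ftBounded Xc c ((n : ℝ) / (2 * Xc)) *
                  Complex.exp (Complex.I * ((2 * π * (κ - (n : ℝ) / (2 * Xc))) : ℝ) * x)) := by
            intro x
            rw [hS]
            simp only
            rw [Finset.mul_sum, Finset.mul_sum]
            refine Finset.sum_congr rfl fun n _ => ?_
            rw [← hterm n x]
            push_cast
            ring
          simp only [hfun]
          rw [intervalIntegral.integral_finset_sum]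
          · refine Finset.sum_congr rfl fun n _ => ?_
            rw [intervalIntegral.integral_const_mul, intervalIntegral.integral_const_mul]
          · intro n _
            apply Continuous.intervalIntegrable
            fun_prop
  -- integrability facts
  have hIc : IntervalIntegrable (fun x => (c x : ℂ)) volume (-Xc) Xc := by
    rw [intervalIntegrable_iff_integrableOn_Ioc_of_le hle]
    exact (hInt.mono_set Set.Ioc_subset_Icc_self).ofReal
  have hIec : IntervalIntegrable (fun x => Complex.exp (Complex.I * 2 * π * κ * x) * (c x : ℂ))
      volume (-Xc) Xc :=
    hIc.continuousOn_mul (Continuous.continuousOn (by fun_prop))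
  have hScont : ∀ N, Continuous (S N) := by
    intro N
    rw [hS]
    simp only
    fun_prop
  have hIeS : ∀ N, IntervalIntegrable
      (fun x => Complex.exp (Complex.I * 2 * π * κ * x) * S N x) volume (-Xc) Xc := by
    intro N
    exact (Continuous.mul (by fun_prop) (hScont N)).intervalIntegrable _ _
  have hone : ∀ x : ℝ, ‖Complex.exp (Complex.I * 2 * π * κ * x)‖ = 1 := by
    intro x
    rw [Complex.norm_exp]
    norm_num [Complex.mul_re, Complex.I_re, Complex.I_im]
  rw [tendsto_iff_norm_sub_tendsto_zero]
  refine squeeze_zero (fun N => norm_nonneg _) (fun N => ?_) hL1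
  rw [hA N]
  rw [show ftBounded Xc c κ
      = ∫ x in (-Xc)..Xc, Complex.exp (Complex.I * 2 * π * κ * x) * (c x : ℂ) from rfl]
  rw [← intervalIntegral.integral_sub (hIeS N) hIec]
  refine le_trans (intervalIntegral.norm_integral_le_integral_norm hle) (le_of_eq ?_)
  refine intervalIntegral.integral_congr fun x _ => ?_
  rw [show Complex.exp (Complex.I * 2 * π * κ * x) * S N x -
        Complex.exp (Complex.I * 2 * π * κ * x) * (c x : ℂ)
      = Complex.exp (Complex.I * 2 * π * κ * x) * (S N x - (c x : ℂ)) by ring]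
  rw [norm_mul, hone, one_mul, norm_sub_rev]
end

section
/- Let f be a probability density on ℝ that is nonincreasing on [X_c, ∞). Then for each integer n ≥ 1, the tail integral I₂(κ_{2n−1}) = ∫_{X_c}^∞ f(s) e^{i2πκ_{2n−1}s} ds satisfies |I₂(κ_{2n−1})| ≤ (X_c/(2n−1)) · f(X_c), where κ_m = m/(2X_c) and X_c > 0. -/
open Real MeasureTheory

theorem tail_integral_bound (f : ℝ → ℝ) (hf0 : ∀ s, 0 ≤ f s) (hfInt : Integrable f)
    (hf1 : ∫ s, f s = 1) (Xc : ℝ) (hXc : 0 < Xc)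
    (hmono : AntitoneOn f (Set.Ici Xc)) (n : ℕ) (hn : 1 ≤ n) :
    ‖(∫ s in Set.Ioi Xc,
        (f s : ℂ) * Complex.exp (Complex.I * 2 * π * ((2 * (n : ℝ) - 1) / (2 * Xc)) * s))‖
      ≤ (Xc / (2 * (n : ℝ) - 1)) * f Xc := by
  have hn1 : (1:ℝ) ≤ (n:ℝ) := by exact_mod_cast hn
  have hden : (0:ℝ) < 2 * (n:ℝ) - 1 := by linarith
  set κ : ℝ := (2 * (n:ℝ) - 1) / (2 * Xc) with hκ
  set T : ℝ := Xc / (2 * (n:ℝ) - 1) with hT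
  have hTpos : 0 < T := div_pos hXc hden
  set c : ℂ := Complex.I * 2 * (π:ℂ) * (κ:ℂ) with hc
  have hκT : κ * T = 1/2 := by
    rw [hκ, hT]
    field_simp
  have hcT : c * (T:ℂ) = (π:ℂ) * Complex.I := by
    have h12 : ((κ * T : ℝ) : ℂ) = 1/2 := by rw [hκT]; norm_num
    calc c * (T:ℂ) = Complex.I * 2 * (π:ℂ) * ((κ * T : ℝ) : ℂ) := by rw [hc]; push_cast; ring
      _ = (π:ℂ) * Complex.I := by rw [h12]; ring
  have hkey : ∀ s : ℝ, Complex.exp (c * ((s:ℂ) + (T:ℂ))) = - Complex.exp (c * s) := by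
    intro s
    rw [mul_add, Complex.exp_add, hcT, Complex.exp_pi_mul_I]
    ring
  have hcs : ∀ s : ℝ, c * s = ((2*π*κ*s : ℝ) : ℂ) * Complex.I := by
    intro s; rw [hc]; push_cast; ring
  have hnorm : ∀ s : ℝ, ‖Complex.exp (c * s)‖ = 1 := by
    intro s
    rw [hcs s, Complex.norm_exp_ofReal_mul_I]
  set h : ℝ → ℂ := fun s => (f s : ℂ) * Complex.exp (c * s) with hh
  have hInt : Integrable h := by
    have h1 : Integrable (fun s : ℝ => Complex.exp (c * s) * (f s : ℂ)) := by
      apply Integrable.bdd_mul hfInt.ofReal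
      · exact (Complex.continuous_exp.comp (continuous_const.mul Complex.continuous_ofReal)).aestronglyMeasurable
      · exact Filter.Eventually.of_forall (fun s => le_of_eq (hnorm s))
    exact h1.congr (Filter.Eventually.of_forall fun s => by rw [hh]; ring)
  -- shift lemma
  have hshift : ∀ {E : Type} [NormedAddCommGroup E] [NormedSpace ℝ E] (φ : ℝ → E),
      ∫ s in Set.Ioi Xc, φ (s + T) = ∫ s in Set.Ioi (Xc + T), φ s := by
    intro E _ _ φ
    have := MeasureTheory.MeasurePreserving.setIntegral_preimage_emb
      (measurePreserving_add_right volume T) (measurableEmbedding_addRight T) φ (Set.Ioi (Xc+T))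
    simpa [Set.preimage_add_const_Ioi] using this
  -- splitting lemma
  have hsplit : ∀ {E : Type} [NormedAddCommGroup E] [NormedSpace ℝ E] (φ : ℝ → E),
      Integrable φ →
      ∫ s in Set.Ioi Xc, φ s
        = (∫ s in Set.Ioc Xc (Xc+T), φ s) + ∫ s in Set.Ioi (Xc+T), φ s := by
    intro E _ _ φ hφ
    rw [← MeasureTheory.setIntegral_union (Set.Ioc_disjoint_Ioi le_rfl) measurableSet_Ioi
      hφ.integrableOn hφ.integrableOn, Set.Ioc_union_Ioi_eq_Ioi (by linarith)]
  set I : ℂ := ∫ s in Set.Ioi Xc, h s with hI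
  set A : ℂ := ∫ s in Set.Ioc Xc (Xc+T), h s with hA
  set B : ℂ := ∫ s in Set.Ioi (Xc+T), h s with hB
  have hIAB : I = A + B := hsplit h hInt
  have hBneg : B = - ∫ s in Set.Ioi Xc, (f (s + T) : ℂ) * Complex.exp (c * s) := by
    rw [hB, ← hshift h]
    rw [← MeasureTheory.integral_neg]
    apply MeasureTheory.setIntegral_congr_fun measurableSet_Ioi
    intro s _
    simp only [hh]
    push_cast
    rw [hkey s]
    ring
  have hIntfT : Integrable (fun s : ℝ => (f (s + T) : ℂ) * Complex.exp (c * s)) := by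
    have h1 : Integrable (fun s : ℝ => Complex.exp (c * s) * (f (s + T) : ℂ)) := by
      apply Integrable.bdd_mul (hfInt.comp_add_right T).ofReal
      · exact (Complex.continuous_exp.comp (continuous_const.mul Complex.continuous_ofReal)).aestronglyMeasurable
      · exact Filter.Eventually.of_forall (fun s => le_of_eq (hnorm s))
    exact h1.congr (Filter.Eventually.of_forall fun s => by ring)
  set D : ℂ := ∫ s in Set.Ioi Xc, ((f s : ℂ) - (f (s + T) : ℂ)) * Complex.exp (c * s) with hD
  have hDIB : D = I + B := by
    rw [hD, hBneg, hI, ← sub_eq_add_neg,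
      ← MeasureTheory.integral_sub hInt.integrableOn hIntfT.integrableOn]
    apply MeasureTheory.setIntegral_congr_fun measurableSet_Ioi
    intro s _
    simp only [hh]
    ring
  have h2I : I + I = A + D := by rw [hDIB, hIAB]; ring
  -- bound A
  have hvol : (volume (Set.Ioc Xc (Xc+T))).toReal = T := by
    rw [Real.volume_Ioc]
    simp [ENNReal.toReal_ofReal hTpos.le]
  have hAbound : ‖A‖ ≤ f Xc * T := by
    rw [hA]
    have hb : ∀ x ∈ Set.Ioc Xc (Xc+T), ‖h x‖ ≤ f Xc := by
      intro x hx
      simp only [hh, norm_mul, hnorm x, mul_one, Complex.norm_real, Real.norm_eq_abs,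
        abs_of_nonneg (hf0 x)]
      exact hmono Set.self_mem_Ici (Set.mem_Ici.mpr hx.1.le) hx.1.le
    have := MeasureTheory.norm_setIntegral_le_of_norm_le_const (μ := volume)
      (by rw [Real.volume_Ioc]; exact ENNReal.ofReal_lt_top) hb
    rw [measureReal_def, hvol] at this
    exact this
  -- bound D
  have hfsub : ∀ s ∈ Set.Ioi Xc, f (s + T) ≤ f s := by
    intro s hs
    exact hmono (Set.mem_Ici.mpr (le_of_lt hs)) (Set.mem_Ici.mpr (by linarith [hs.out])) (by linarith [hTpos])
  have hDbound : ‖D‖ ≤ f Xc * T := by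
    have hnle : ‖D‖ ≤ ∫ s in Set.Ioi Xc, (f s - f (s + T)) := by
      rw [hD]
      calc ‖∫ s in Set.Ioi Xc, ((f s : ℂ) - (f (s + T) : ℂ)) * Complex.exp (c * s)‖
          ≤ ∫ s in Set.Ioi Xc, ‖((f s : ℂ) - (f (s + T) : ℂ)) * Complex.exp (c * s)‖ :=
            MeasureTheory.norm_integral_le_integral_norm _
        _ = ∫ s in Set.Ioi Xc, (f s - f (s + T)) := by
            apply MeasureTheory.setIntegral_congr_fun measurableSet_Ioi
            intro s hs
            simp only [norm_mul, hnorm s, mul_one, ← Complex.ofReal_sub, Complex.norm_real,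
              Real.norm_eq_abs]
            exact abs_of_nonneg (by linarith [hfsub s hs])
    have heq : ∫ s in Set.Ioi Xc, (f s - f (s + T))
        = ∫ s in Set.Ioc Xc (Xc+T), f s := by
      rw [MeasureTheory.integral_sub hfInt.integrableOn ((hfInt.comp_add_right T).integrableOn),
        hshift f, hsplit f hfInt]
      ring
    have hIocle : ∫ s in Set.Ioc Xc (Xc+T), f s ≤ f Xc * T := by
      calc ∫ s in Set.Ioc Xc (Xc+T), f s
          ≤ ∫ _s in Set.Ioc Xc (Xc+T), f Xc := by
            apply MeasureTheory.setIntegral_mono_on hfInt.integrableOn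
              ((integrableOn_const_iff (by finiteness)).mpr (Or.inr (by rw [Real.volume_Ioc]; exact ENNReal.ofReal_lt_top)))
              measurableSet_Ioc
            intro x hx
            exact hmono Set.self_mem_Ici (Set.mem_Ici.mpr hx.1.le) hx.1.le
        _ = f Xc * T := by rw [MeasureTheory.setIntegral_const, smul_eq_mul, measureReal_def, hvol, mul_comm]
    linarith
  -- conclude
  have hfinal : ‖I‖ ≤ f Xc * T := by
    have : ‖I + I‖ ≤ ‖A‖ + ‖D‖ := h2I ▸ norm_add_le A D
    have h2 : ‖I + I‖ = 2 * ‖I‖ := by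
      rw [← two_mul, norm_mul]
      simp
    linarith
  calc ‖(∫ s in Set.Ioi Xc,
        (f s : ℂ) * Complex.exp (Complex.I * 2 * π * ((2 * (n : ℝ) - 1) / (2 * Xc)) * s))‖
      = ‖I‖ := by
        rw [hI]
        congr 1
        apply MeasureTheory.setIntegral_congr_fun measurableSet_Ioi
        intro s _
        simp only [hh]
        congr 2
        rw [hc, hκ]
        push_cast
        ring
    _ ≤ f Xc * T := hfinal
    _ = Xc / (2 * (n:ℝ) - 1) * f Xc := by rw [hT]; ring
end
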